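/- The family Ω = {ω_a : a ∈ ℤ} is admissible, that is: (i) for every integer b, ∑_{s=0}^{r} (−1)^{r−s}·σ_{r−s}(u_1,…,u_r)·ω_{s+b} = 0, where σ_i denotes the i-th elementary symmetric polynomial in u_1,…,u_r; and (ii) for every integer a ≥ 0, ω_a = ω_{−a} + ∑_{i=1}^{a} ϱ^{-1}·δ·(ω_{a−i}·ω_{−i} − ω_{a−2i}). -/

import Mathlib

open Polynomial Finset

private lemma aux_dvd {F : Type*} [Field F] (L : List F) :
    (1 - X ^ 2 : F[X]) ∣
      ((L.map fun a => 1 - C a * X).prod +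
        (if Odd L.length then X else -1) * (L.map fun a => C a - X).prod) := by
  induction L with
  | nil => simp
  | cons a l ih =>
    obtain ⟨H, hH⟩ := ih
    by_cases h : Odd l.length
    · refine ⟨H * (1 - C a * X) - C a * (l.map fun a => C a - X).prod, ?_⟩
      simp only [List.map_cons, List.prod_cons, List.length_cons]
      rw [if_pos h] at hH
      rw [if_neg (by simp only [Nat.odd_add_one, Nat.not_even_iff_odd, not_not]; simpa using h)]
      linear_combination (1 - C a * X) * hH
    · refine ⟨H * (1 - C a * X) + (l.map fun a => C a - X).prod, ?_⟩
      simp only [List.map_cons, List.prod_cons, List.length_cons]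
      rw [if_neg h] at hH
      rw [if_pos (by simpa [Nat.odd_add_one, Nat.not_odd_iff_even] using h)]
      linear_combination (1 - C a * X) * hH

private lemma aux_key {F : Type*} [Field F] {r : ℕ} (hr : 1 ≤ r)
    (e : F) (u : Fin r → F) (hu0 : ∀ i, u i ≠ 0) (huinj : Function.Injective u)
    (hu1 : ∀ i j, u i * u j ≠ 1) (γ : Fin r → F)
    (hγ : ∀ i, γ i =
      ((if Odd r then 1 else -u i) + e * (u i ^ 2 - 1) * ∏ j ∈ Finset.univ.erase i, u j) *
        ∏ j ∈ Finset.univ.erase i, (u i * u j - 1) / (u i - u j)) :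
    ∀ j, ∑ k, γ k * (1 - u j * u k)⁻¹ = (1 - u j ^ 2)⁻¹ - e := by
  classical
  -- basic nonvanishing facts
  have hsub : ∀ i j : Fin r, (1 : F) - u i * u j ≠ 0 := fun i j =>
    sub_ne_zero.mpr fun h => hu1 i j h.symm
  have hsq : ∀ i : Fin r, (1 : F) - u i ^ 2 ≠ 0 := by
    intro i; have := hsub i i; rwa [← sq] at this
  -- the polynomials
  set P1 : F[X] := ∏ l, (1 - C (u l) * X) with hP1
  set P2 : F[X] := ∏ l, (C (u l) - X) with hP2
  set S : F[X] := ∑ k, C (γ k) * ∏ l ∈ Finset.univ.erase k, (1 - C (u l) * X) with hS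
  set G : F[X] := if Odd r then X else -1 with hG
  set U : F := ∏ l, u l with hU
  -- divisibility
  obtain ⟨H, hH⟩ : (1 - X ^ 2 : F[X]) ∣ (P1 + G * P2) := by
    have := aux_dvd (F := F) (List.ofFn u)
    simpa [hP1, hP2, hG, List.map_ofFn, List.prod_ofFn] using this
  -- degree facts
  have hdeg1 : ∀ a : F, (1 - C a * X : F[X]).natDegree ≤ 1 := by
    intro a
    refine le_trans (natDegree_sub_le _ _) ?_
    simp only [natDegree_one, max_le_iff]
    exact ⟨Nat.zero_le 1, le_trans (natDegree_C_mul_le _ _) natDegree_X_le⟩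
  have hdegP1 : P1.natDegree ≤ r := by
    refine le_trans (natDegree_prod_le _ _) ?_
    calc ∑ l : Fin r, (1 - C (u l) * X : F[X]).natDegree ≤ ∑ l : Fin r, 1 :=
          Finset.sum_le_sum fun l _ => hdeg1 (u l)
      _ = r := by simp
  have hdegP2 : P2.natDegree ≤ r := by
    refine le_trans (natDegree_prod_le _ _) ?_
    calc ∑ l : Fin r, (C (u l) - X : F[X]).natDegree ≤ ∑ l : Fin r, 1 := by
          refine Finset.sum_le_sum fun l _ => ?_
          refine le_trans (natDegree_sub_le _ _) ?_
          simp [natDegree_X_le]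
      _ = r := by simp
  have hdegS : S.natDegree ≤ r - 1 := by
    refine natDegree_sum_le_of_forall_le _ _ fun k _ => ?_
    refine le_trans (natDegree_C_mul_le _ _) ?_
    refine le_trans (natDegree_prod_le _ _) ?_
    calc ∑ l ∈ Finset.univ.erase k, (1 - C (u l) * X : F[X]).natDegree
        ≤ ∑ l ∈ Finset.univ.erase k, 1 := Finset.sum_le_sum fun l _ => hdeg1 (u l)
      _ = r - 1 := by simp [Finset.card_erase_of_mem]
  -- the difference C U * P2 - P1 has low degree
  have hM : (C U * P2 - P1 : F[X]).natDegree ≤ r - 1 := by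
    set M1 : F[X] := ∏ l, (X - C (u l)) with hM1
    set M2 : F[X] := ∏ l, (X - C (u l)⁻¹) with hM2
    have hP2M : P2 = (-1 : F[X]) ^ r * M1 := by
      calc P2 = ∏ l : Fin r, (-1 : F[X]) * (X - C (u l)) :=
            Finset.prod_congr rfl fun l _ => by ring
        _ = (∏ _l : Fin r, (-1 : F[X])) * M1 := Finset.prod_mul_distrib
        _ = (-1 : F[X]) ^ r * M1 := by rw [Finset.prod_const]; simp
    have hP1M : P1 = C U * ((-1 : F[X]) ^ r * M2) := by
      have step : ∀ l : Fin r, (1 - C (u l) * X : F[X]) =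
          C (u l) * ((-1) * (X - C (u l)⁻¹)) := by
        intro l
        have : (C (u l) * C (u l)⁻¹ : F[X]) = 1 := by
          rw [← map_mul, mul_inv_cancel₀ (hu0 l), map_one]
        linear_combination -this
      calc P1 = ∏ l : Fin r, (C (u l) * ((-1) * (X - C (u l)⁻¹))) :=
            Finset.prod_congr rfl fun l _ => step l
        _ = (∏ l : Fin r, C (u l)) * ∏ l : Fin r, ((-1 : F[X]) * (X - C (u l)⁻¹)) :=
            Finset.prod_mul_distrib
        _ = C U * ((∏ _l : Fin r, (-1 : F[X])) * M2) := by
            rw [Finset.prod_mul_distrib, hU, map_prod]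
        _ = C U * ((-1 : F[X]) ^ r * M2) := by rw [Finset.prod_const]; simp
    have hm1 : M1.Monic := monic_prod_of_monic _ _ fun l _ => monic_X_sub_C _
    have hm2 : M2.Monic := monic_prod_of_monic _ _ fun l _ => monic_X_sub_C _
    have hd1 : M1.natDegree = r := by
      rw [hM1, natDegree_prod _ _ fun l _ => X_sub_C_ne_zero (u l)]
      simp [natDegree_X_sub_C]
    have hd2 : M2.natDegree = r := by
      rw [hM2, natDegree_prod _ _ fun l _ => X_sub_C_ne_zero ((u l)⁻¹)]
      simp [natDegree_X_sub_C]
    have hsub12 : (M1 - M2).natDegree ≤ r - 1 := by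
      by_cases h12 : M1 - M2 = 0
      · simp [h12]
      · have hlt : (M1 - M2).degree < M1.degree := by
          refine degree_sub_lt ?_ hm1.ne_zero ?_
          · rw [degree_eq_natDegree hm1.ne_zero, degree_eq_natDegree hm2.ne_zero, hd1, hd2]
          · rw [hm1.leadingCoeff, hm2.leadingCoeff]
        have : (M1 - M2).natDegree < r := by
          rw [natDegree_lt_iff_degree_lt h12]
          rw [degree_eq_natDegree hm1.ne_zero, hd1] at hlt
          exact_mod_cast hlt
        omega
    calc (C U * P2 - P1).natDegree = (C U * ((-1 : F[X]) ^ r * (M1 - M2))).natDegree := by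
          rw [hP2M, hP1M]; ring_nf
      _ ≤ (M1 - M2).natDegree := by
          refine le_trans natDegree_mul_le ?_
          refine le_trans (add_le_add le_rfl natDegree_mul_le) ?_
          simp [natDegree_pow]
      _ ≤ r - 1 := hsub12
  -- degree of H
  have h2 : (1 - X ^ 2 : F[X]).natDegree = 2 := by
    have h : (1 - X ^ 2 : F[X]) = -(X ^ 2 - Polynomial.C 1) := by
      rw [map_one]; ring
    rw [h, natDegree_neg, natDegree_X_pow_sub_C]
  have hx2 : (1 - X ^ 2 : F[X]) ≠ 0 := fun hcon => by simp [hcon] at h2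
  have hdegH : H.natDegree ≤ r - 1 := by
    by_cases h0 : H = 0
    · simp [h0]
    have hmul : ((1 - X ^ 2 : F[X]) * H).natDegree = 2 + H.natDegree := by
      rw [natDegree_mul hx2 h0, h2]
    have hGdeg : G.natDegree ≤ 1 := by
      rw [hG]; split
      · exact le_of_eq natDegree_X
      · simp
    have hleft : (P1 + G * P2).natDegree ≤ r + 1 := by
      refine le_trans (natDegree_add_le _ _) (max_le (le_trans hdegP1 (by omega)) ?_)
      refine le_trans natDegree_mul_le ?_
      omega
    rw [hH, hmul] at hleft
    omega
  -- the key polynomial identity, via evaluation at the r points (u k)⁻¹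
  have main : S = C e * (C U * P2 - P1) + H := by
    rw [← sub_eq_zero]
    refine eq_zero_of_natDegree_lt_card_of_eval_eq_zero _
      (f := fun k : Fin r => (u k)⁻¹) (fun a b hab => huinj (inv_injective hab)) ?_ ?_
    · -- evaluations
      intro k
      set v : F := (u k)⁻¹ with hvdef
      have hv : u k * v = 1 := mul_inv_cancel₀ (hu0 k)
      have hv0 : v ≠ 0 := inv_ne_zero (hu0 k)
      have hv2 : (1 : F) - v ^ 2 ≠ 0 := by
        have : (1 : F) - v ^ 2 = (u k ^ 2 - 1) * v ^ 2 := by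
          have h : u k ^ 2 * v ^ 2 = 1 := by
            rw [← mul_pow, hv, one_pow]
          linear_combination -h
        rw [this]
        exact mul_ne_zero (fun hcon => hsq k (by linear_combination -hcon)) (pow_ne_zero 2 hv0)
      have evalP1 : P1.eval v = 0 := by
        rw [hP1, eval_prod]
        refine Finset.prod_eq_zero (Finset.mem_univ k) ?_
        simp [hv]
      have evalP2 : P2.eval v = ∏ l, (u l - v) := by
        rw [hP2, eval_prod]; simp
      have evalS : S.eval v = γ k * ∏ l ∈ Finset.univ.erase k, (1 - u l * v) := by
        rw [hS, eval_finset_sum, Finset.sum_eq_single k]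
        · simp [eval_prod]
        · intro m _ hmk
          rw [eval_mul, eval_C, eval_prod,
            Finset.prod_eq_zero (Finset.mem_erase.mpr ⟨Ne.symm hmk, Finset.mem_univ k⟩)
              (by simp [hv]), mul_zero]
        · intro hcon; exact absurd (Finset.mem_univ k) hcon
      have evalG : G.eval v = if Odd r then v else -1 := by
        rw [hG]; split <;> simp
      have evalH : (1 - v ^ 2) * H.eval v = (if Odd r then v else -1) * ∏ l, (u l - v) := by
        have h := congrArg (eval v) hH
        rw [eval_mul, eval_add, eval_mul, evalP1, evalP2, evalG] at h
        simp only [eval_sub, eval_pow, eval_one, eval_X] at h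
        linear_combination -h
      simp only [eval_sub, eval_add, eval_mul, eval_C]
      rw [evalP1, evalP2, evalS]
      -- reduce to an identity multiplied by (1 - v^2)
      rw [sub_eq_zero]
      refine mul_left_cancel₀ hv2 ?_
      rw [mul_add, evalH]
      -- now substitute the explicit products
      have hPk : ∏ l ∈ Finset.univ.erase k, (1 - u l * v)
          = (∏ l ∈ Finset.univ.erase k, (u k - u l)) * v ^ (r - 1) := by
        calc ∏ l ∈ Finset.univ.erase k, (1 - u l * v)
            = ∏ l ∈ Finset.univ.erase k, ((u k - u l) * v) :=
              Finset.prod_congr rfl fun l _ => by linear_combination -hv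
          _ = (∏ l ∈ Finset.univ.erase k, (u k - u l)) * ∏ _l ∈ Finset.univ.erase k, v :=
              Finset.prod_mul_distrib
          _ = (∏ l ∈ Finset.univ.erase k, (u k - u l)) * v ^ (r - 1) := by
              rw [Finset.prod_const, Finset.card_erase_of_mem (Finset.mem_univ k),
                Finset.card_univ, Fintype.card_fin]
      have hW0 : ∏ l, (u l - v) = (∏ l, (u k * u l - 1)) * v ^ r := by
        calc ∏ l, (u l - v) = ∏ l, ((u k * u l - 1) * v) :=
              Finset.prod_congr rfl fun l _ => by linear_combination -(u l) * hv
          _ = (∏ l, (u k * u l - 1)) * ∏ _l : Fin r, v := Finset.prod_mul_distrib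
          _ = (∏ l, (u k * u l - 1)) * v ^ r := by
              rw [Finset.prod_const, Finset.card_univ, Fintype.card_fin]
      set A : F := ∏ l ∈ Finset.univ.erase k, (u k * u l - 1) with hA
      set B : F := ∏ l ∈ Finset.univ.erase k, (u k - u l) with hB
      set Pi' : F := ∏ l ∈ Finset.univ.erase k, u l with hPi
      have hQk : (∏ l, (u k * u l - 1)) = (u k * u k - 1) * A :=
        (Finset.mul_prod_erase _ _ (Finset.mem_univ k)).symm
      have hUk : U = u k * Pi' := by
        rw [hU]; exact (Finset.mul_prod_erase _ _ (Finset.mem_univ k)).symm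
      have hγk : γ k = ((if Odd r then 1 else -u k) + e * (u k ^ 2 - 1) * Pi') * (A / B) := by
        rw [hγ k, Finset.prod_div_distrib]
      have hB0 : B ≠ 0 := by
        rw [hB]
        refine Finset.prod_ne_zero_iff.mpr fun l hl => sub_ne_zero.mpr fun hcon =>
          (Finset.mem_erase.mp hl).1 ((huinj hcon).symm)
      have hAB : A / B * B = A := div_mul_cancel₀ A hB0
      have hvr : v ^ r = v ^ (r - 1) * v := by
        rw [← pow_succ]; congr 1; omega
      rw [hPk, hW0, hγk, hUk, hQk, hvr]
      by_cases ho : Odd r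
      · simp only [if_pos ho]
        linear_combination ((1 - v^2) * ((1:F) + e * (u k^2 - 1) * Pi') * v^(r-1)) * hAB -
          (A * v^(r-1) * ((1 + u k * v) + e * (u k^2 - 1) * Pi' * (1 - v^2))) * hv
      · simp only [if_neg ho]
        linear_combination ((1 - v^2) * (-(u k) + e * (u k^2 - 1) * Pi') * v^(r-1)) * hAB +
          (A * v^(r-1) * ((u k + v) - e * (u k^2 - 1) * Pi' * (1 - v^2))) * hv
    · -- degree bound
      refine lt_of_le_of_lt (natDegree_sub_le _ _) ?_
      have : (C e * (C U * P2 - P1) + H).natDegree ≤ r - 1 :=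
        le_trans (natDegree_add_le _ _)
          (max_le (le_trans (natDegree_C_mul_le _ _) hM) hdegH)
      have hcard : Fintype.card (Fin r) = r := Fintype.card_fin r
      rw [hcard]
      omega
  -- now evaluate the identity at u j
  intro j
  have hP2j : P2.eval (u j) = 0 := by
    rw [hP2, eval_prod]
    refine Finset.prod_eq_zero (Finset.mem_univ j) ?_
    simp
  have hP1j : P1.eval (u j) = ∏ l, (1 - u l * u j) := by
    rw [hP1, eval_prod]; simp
  have hSj : S.eval (u j) = ∑ k, γ k * ∏ l ∈ Finset.univ.erase k, (1 - u l * u j) := by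
    rw [hS, eval_finset_sum]
    refine Finset.sum_congr rfl fun k _ => ?_
    rw [eval_mul, eval_C, eval_prod]
    simp
  have hHj : (1 - u j ^ 2) * H.eval (u j) = ∏ l, (1 - u l * u j) := by
    have h := congrArg (eval (u j)) hH
    rw [eval_mul, eval_add, eval_mul, hP1j, hP2j, mul_zero, add_zero] at h
    simp only [eval_sub, eval_pow, eval_one, eval_X] at h
    linear_combination -h
  have hmainj := congrArg (eval (u j)) main
  rw [eval_add, eval_mul, eval_C, eval_sub, eval_mul, eval_C, hP1j, hP2j, hSj] at hmainj
  set Pv : F := ∏ l, (1 - u l * u j) with hPv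
  have hPv0 : Pv ≠ 0 := by
    rw [hPv]
    exact Finset.prod_ne_zero_iff.mpr fun l _ => hsub l j
  have hsum : ∑ k, γ k * (1 - u j * u k)⁻¹
      = (∑ k, γ k * ∏ l ∈ Finset.univ.erase k, (1 - u l * u j)) * Pv⁻¹ := by
    rw [Finset.sum_mul]
    refine Finset.sum_congr rfl fun k _ => ?_
    have hfac : Pv = (1 - u k * u j) * ∏ l ∈ Finset.univ.erase k, (1 - u l * u j) := by
      rw [hPv]
      exact (Finset.mul_prod_erase _ _ (Finset.mem_univ k)).symm
    have hQ0 : (∏ l ∈ Finset.univ.erase k, (1 - u l * u j)) ≠ 0 :=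
      Finset.prod_ne_zero_iff.mpr fun l _ => hsub l j
    rw [hfac, mul_comm (u k) (u j), mul_inv, mul_comm ((1 - u j * u k)⁻¹) _, ← mul_assoc,
      mul_assoc _ _ ((∏ l ∈ Finset.univ.erase k, (1 - u l * u j))⁻¹),
      mul_inv_cancel₀ hQ0, mul_one]
  rw [hsum, hmainj]
  have hHj' : H.eval (u j) = Pv * (1 - u j ^ 2)⁻¹ := by
    field_simp [hsq j]
    linear_combination hHj
  rw [hHj']
  field_simp [hPv0, hsq j]
  ring

/-- The family `Ω = {ω_a : a ∈ ℤ}` is admissible: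
(i) for every integer `b`, `∑_{s=0}^{r} (−1)^{r−s}·σ_{r−s}(u₁,…,u_r)·ω_{s+b} = 0`, where
`σ_i` is the `i`-th elementary symmetric polynomial of `u₁,…,u_r`; and
(ii) for every integer `a ≥ 0`,
`ω_a = ω_{−a} + ∑_{i=1}^{a} ϱ⁻¹δ(ω_{a−i}·ω_{−i} − ω_{a−2i})`. -/
theorem stmt_9 {F : Type*} [Field F] {r : ℕ} (hr : 1 ≤ r)
    (q ϱ α : F) (hq : q ≠ 0) (hδ : q - q⁻¹ ≠ 0) (hϱ : ϱ ≠ 0)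
    (u : Fin r → F) (hu0 : ∀ i, u i ≠ 0) (huinj : Function.Injective u)
    (hu1 : ∀ i j, u i * u j ≠ 1)
    (hα : if Odd r then α = 1 ∨ α = -1 else α = q⁻¹ ∨ α = -q)
    (hϱα : ϱ⁻¹ = α * ∏ l, u l)
    (γ : Fin r → F)
    (hγ : ∀ i, γ i =
      ((if Odd r then 1 else -u i) +
          (q - q⁻¹)⁻¹ * ϱ * (u i ^ 2 - 1) * ∏ j ∈ Finset.univ.erase i, u j) *
        ∏ j ∈ Finset.univ.erase i, (u i * u j - 1) / (u i - u j))
    (ω : ℤ → F) (hω : ∀ a : ℤ, ω a = ∑ j, u j ^ a * γ j)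
    (σ : ℕ → F)
    (hσ : ∀ k : ℕ, σ k =
      ∑ t ∈ Finset.powersetCard k (Finset.univ : Finset (Fin r)), ∏ i ∈ t, u i) :
    (∀ b : ℤ, ∑ s ∈ Finset.range (r + 1),
        (-1 : F) ^ (r - s) * σ (r - s) * ω ((s : ℤ) + b) = 0) ∧
    (∀ a : ℕ, ω (a : ℤ) = ω (-(a : ℤ)) +
        ∑ i ∈ Finset.Icc 1 a, ϱ⁻¹ * (q - q⁻¹) *
          (ω ((a : ℤ) - (i : ℤ)) * ω (-(i : ℤ)) - ω ((a : ℤ) - 2 * (i : ℤ)))) := by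
  classical
  constructor
  · -- part (i)
    intro b
    -- the polynomial with roots u l
    set M : F[X] := ∏ l, (X - C (u l)) with hM
    have hMdeg : M.natDegree = r := by
      rw [hM, natDegree_prod _ _ fun l _ => X_sub_C_ne_zero (u l)]
      simp [natDegree_X_sub_C]
    have hMcoeff : ∀ s : ℕ, s ≤ r → M.coeff s = (-1 : F) ^ (r - s) * σ (r - s) := by
      intro s hs
      have hcard : Multiset.card ((Finset.univ : Finset (Fin r)).val.map u) = r := by simp
      have h := Multiset.prod_X_sub_C_coeff ((Finset.univ : Finset (Fin r)).val.map u)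
        (k := s) (by rw [hcard]; exact hs)
      rw [Multiset.map_map] at h
      have hMeq : M = ((Finset.univ : Finset (Fin r)).val.map
          ((fun t => X - C t) ∘ u)).prod := by
        rw [hM, Finset.prod_eq_multiset_prod]
        rfl
      rw [hMeq, h, hcard, Finset.esymm_map_val, hσ (r - s)]
    have hMeval : ∀ j, M.eval (u j) = 0 := by
      intro j
      rw [hM, eval_prod]
      refine Finset.prod_eq_zero (Finset.mem_univ j) ?_
      simp
    have inner : ∀ j : Fin r,
        ∑ s ∈ Finset.range (r + 1), (-1 : F) ^ (r - s) * σ (r - s) * u j ^ (s : ℤ) = 0 := by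
      intro j
      have h := Polynomial.eval_eq_sum_range (p := M) (x := u j)
      rw [hMeval j, hMdeg] at h
      calc ∑ s ∈ Finset.range (r + 1), (-1 : F) ^ (r - s) * σ (r - s) * u j ^ (s : ℤ)
          = ∑ s ∈ Finset.range (r + 1), M.coeff s * u j ^ s :=
            Finset.sum_congr rfl fun s hs => by
              rw [hMcoeff s (by have := Finset.mem_range.mp hs; omega), zpow_natCast]
        _ = 0 := h.symm
    calc ∑ s ∈ Finset.range (r + 1), (-1 : F) ^ (r - s) * σ (r - s) * ω ((s : ℤ) + b)
        = ∑ s ∈ Finset.range (r + 1), ∑ j,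
            (-1 : F) ^ (r - s) * σ (r - s) * u j ^ (s : ℤ) * (u j ^ (b : ℤ) * γ j) := by
          refine Finset.sum_congr rfl fun s _ => ?_
          rw [hω, Finset.mul_sum]
          refine Finset.sum_congr rfl fun j _ => ?_
          rw [zpow_add₀ (hu0 j)]
          ring
      _ = ∑ j, (∑ s ∈ Finset.range (r + 1),
            (-1 : F) ^ (r - s) * σ (r - s) * u j ^ (s : ℤ)) * (u j ^ (b : ℤ) * γ j) := by
          rw [Finset.sum_comm]
          exact Finset.sum_congr rfl fun j _ => (Finset.sum_mul _ _ _).symm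
      _ = 0 := by
          refine Finset.sum_eq_zero fun j _ => ?_
          rw [inner j, zero_mul]
  · -- part (ii)
    intro a
    have hsub : ∀ i j : Fin r, (1 : F) - u i * u j ≠ 0 := fun i j =>
      sub_ne_zero.mpr fun h => hu1 i j h.symm
    have key : ∀ j, ∑ k, γ k * (1 - u j * u k)⁻¹
        = (1 - u j ^ 2)⁻¹ - (q - q⁻¹)⁻¹ * ϱ :=
      aux_key hr ((q - q⁻¹)⁻¹ * ϱ) u hu0 huinj hu1 γ hγ
    -- geometric sums
    have geom : ∀ w : F, w ≠ 0 → ∀ n : ℕ,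
        (1 - w) * ∑ i ∈ Finset.Icc 1 n, w ^ (-(i : ℤ)) = w ^ (-(n : ℤ)) - 1 := by
      intro w hw0 n
      induction n with
      | zero => simp
      | succ n ih =>
        rw [Finset.sum_Icc_succ_top (by omega : 1 ≤ n + 1), mul_add, ih]
        have hz : w * w ^ (-((n : ℤ) + 1)) = w ^ (-(n : ℤ)) := by
          rw [show (-((n : ℤ) + 1)) = -(n : ℤ) + (-1) by ring, zpow_add₀ hw0, zpow_neg_one]
          field_simp
        push_cast
        linear_combination -hz
    have geom' : ∀ w : F, w ≠ 0 → (1 : F) - w ≠ 0 → ∀ n : ℕ,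
        ∑ i ∈ Finset.Icc 1 n, w ^ (-(i : ℤ)) = (w ^ (-(n : ℤ)) - 1) * (1 - w)⁻¹ := by
      intro w hw0 hw1 n
      rw [eq_mul_inv_iff_mul_eq₀ hw1, mul_comm]
      exact geom w hw0 n
    -- cancellation
    have hcan : ∀ j : Fin r, u j ^ (a : ℤ) * u j ^ (-(a : ℤ)) = 1 := fun j => by
      rw [← zpow_add₀ (hu0 j), add_neg_cancel, zpow_zero]
    -- sum 1
    have T1 : ∑ i ∈ Finset.Icc 1 a, ω ((a : ℤ) - (i : ℤ)) * ω (-(i : ℤ))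
        = ∑ j, ∑ k, γ j * γ k *
            (u j ^ (a : ℤ) * ((u j * u k) ^ (-(a : ℤ)) - 1) * (1 - u j * u k)⁻¹) := by
      calc ∑ i ∈ Finset.Icc 1 a, ω ((a : ℤ) - (i : ℤ)) * ω (-(i : ℤ))
          = ∑ i ∈ Finset.Icc 1 a, ∑ j, ∑ k,
              γ j * γ k * (u j ^ (a : ℤ) * (u j * u k) ^ (-(i : ℤ))) := by
            refine Finset.sum_congr rfl fun i _ => ?_
            rw [hω, hω, Finset.sum_mul_sum]
            refine Finset.sum_congr rfl fun j _ => Finset.sum_congr rfl fun k _ => ?_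
            rw [mul_zpow, show ((a : ℤ) - (i : ℤ)) = (a : ℤ) + (-(i : ℤ)) by ring,
              zpow_add₀ (hu0 j)]
            ring
        _ = ∑ j, ∑ k, ∑ i ∈ Finset.Icc 1 a,
              γ j * γ k * (u j ^ (a : ℤ) * (u j * u k) ^ (-(i : ℤ))) := by
            rw [Finset.sum_comm]
            exact Finset.sum_congr rfl fun j _ => Finset.sum_comm
        _ = ∑ j, ∑ k, γ j * γ k *
              (u j ^ (a : ℤ) * ((u j * u k) ^ (-(a : ℤ)) - 1) * (1 - u j * u k)⁻¹) := by
            refine Finset.sum_congr rfl fun j _ => Finset.sum_congr rfl fun k _ => ?_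
            rw [← Finset.mul_sum, ← Finset.mul_sum,
              geom' (u j * u k) (mul_ne_zero (hu0 j) (hu0 k)) (hsub j k) a]
            ring
    -- sum 2
    have T2 : ∑ i ∈ Finset.Icc 1 a, ω ((a : ℤ) - 2 * (i : ℤ))
        = ∑ j, γ j *
            (u j ^ (a : ℤ) * ((u j * u j) ^ (-(a : ℤ)) - 1) * (1 - u j * u j)⁻¹) := by
      calc ∑ i ∈ Finset.Icc 1 a, ω ((a : ℤ) - 2 * (i : ℤ))
          = ∑ i ∈ Finset.Icc 1 a, ∑ j,
              γ j * (u j ^ (a : ℤ) * (u j * u j) ^ (-(i : ℤ))) := by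
            refine Finset.sum_congr rfl fun i _ => ?_
            rw [hω]
            refine Finset.sum_congr rfl fun j _ => ?_
            rw [mul_zpow, show ((a : ℤ) - 2 * (i : ℤ)) = (a : ℤ) + (-(i : ℤ) + -(i : ℤ)) by ring,
              zpow_add₀ (hu0 j), zpow_add₀ (hu0 j)]
            ring
        _ = ∑ j, ∑ i ∈ Finset.Icc 1 a,
              γ j * (u j ^ (a : ℤ) * (u j * u j) ^ (-(i : ℤ))) := Finset.sum_comm
        _ = ∑ j, γ j *
              (u j ^ (a : ℤ) * ((u j * u j) ^ (-(a : ℤ)) - 1) * (1 - u j * u j)⁻¹) := by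
            refine Finset.sum_congr rfl fun j _ => ?_
            rw [← Finset.mul_sum, ← Finset.mul_sum,
              geom' (u j * u j) (mul_ne_zero (hu0 j) (hu0 j)) (hsub j j) a]
            ring
    -- split the double sum
    have T1split : ∑ j, ∑ k, γ j * γ k *
          (u j ^ (a : ℤ) * ((u j * u k) ^ (-(a : ℤ)) - 1) * (1 - u j * u k)⁻¹)
        = (∑ k, γ k * u k ^ (-(a : ℤ)) * ((1 - u k ^ 2)⁻¹ - (q - q⁻¹)⁻¹ * ϱ))
          - ∑ j, γ j * u j ^ (a : ℤ) * ((1 - u j ^ 2)⁻¹ - (q - q⁻¹)⁻¹ * ϱ) := by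
      calc ∑ j, ∑ k, γ j * γ k *
            (u j ^ (a : ℤ) * ((u j * u k) ^ (-(a : ℤ)) - 1) * (1 - u j * u k)⁻¹)
          = ∑ j, ∑ k, ((γ k * u k ^ (-(a : ℤ))) * (γ j * (1 - u k * u j)⁻¹)
              - (γ j * u j ^ (a : ℤ)) * (γ k * (1 - u j * u k)⁻¹)) := by
            refine Finset.sum_congr rfl fun j _ => Finset.sum_congr rfl fun k _ => ?_
            rw [mul_zpow, mul_comm (u k) (u j)]
            linear_combination (γ j * γ k * u k ^ (-(a:ℤ)) * (1 - u j * u k)⁻¹) * hcan j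
        _ = (∑ j, ∑ k, (γ k * u k ^ (-(a : ℤ))) * (γ j * (1 - u k * u j)⁻¹))
            - ∑ j, ∑ k, (γ j * u j ^ (a : ℤ)) * (γ k * (1 - u j * u k)⁻¹) := by
            rw [← Finset.sum_sub_distrib]
            exact Finset.sum_congr rfl fun j _ => Finset.sum_sub_distrib _ _
        _ = (∑ k, γ k * u k ^ (-(a : ℤ)) * ((1 - u k ^ 2)⁻¹ - (q - q⁻¹)⁻¹ * ϱ))
            - ∑ j, γ j * u j ^ (a : ℤ) * ((1 - u j ^ 2)⁻¹ - (q - q⁻¹)⁻¹ * ϱ) := by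
            congr 1
            · rw [Finset.sum_comm]
              refine Finset.sum_congr rfl fun k _ => ?_
              rw [← Finset.mul_sum, key k]
            · refine Finset.sum_congr rfl fun j _ => ?_
              rw [← Finset.mul_sum, key j]
    -- put everything together
    have hce : (ϱ⁻¹ * (q - q⁻¹)) * ((q - q⁻¹)⁻¹ * ϱ) = 1 := by
      have h1 : (q - q⁻¹) * (q - q⁻¹)⁻¹ = 1 := mul_inv_cancel₀ hδ
      have h2 : ϱ⁻¹ * ϱ = 1 := inv_mul_cancel₀ hϱ
      linear_combination (ϱ⁻¹ * ϱ) * h1 + h2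
    have E : ∑ i ∈ Finset.Icc 1 a, ϱ⁻¹ * (q - q⁻¹) *
          (ω ((a : ℤ) - (i : ℤ)) * ω (-(i : ℤ)) - ω ((a : ℤ) - 2 * (i : ℤ)))
        = ω (a : ℤ) - ω (-(a : ℤ)) := by
      calc ∑ i ∈ Finset.Icc 1 a, ϱ⁻¹ * (q - q⁻¹) *
            (ω ((a : ℤ) - (i : ℤ)) * ω (-(i : ℤ)) - ω ((a : ℤ) - 2 * (i : ℤ)))
          = ϱ⁻¹ * (q - q⁻¹) * ((∑ i ∈ Finset.Icc 1 a, ω ((a : ℤ) - (i : ℤ)) * ω (-(i : ℤ)))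
              - ∑ i ∈ Finset.Icc 1 a, ω ((a : ℤ) - 2 * (i : ℤ))) := by
            rw [← Finset.sum_sub_distrib, Finset.mul_sum]
        _ = ϱ⁻¹ * (q - q⁻¹) *
            (((∑ k, γ k * u k ^ (-(a : ℤ)) * ((1 - u k ^ 2)⁻¹ - (q - q⁻¹)⁻¹ * ϱ))
              - ∑ j, γ j * u j ^ (a : ℤ) * ((1 - u j ^ 2)⁻¹ - (q - q⁻¹)⁻¹ * ϱ))
              - ∑ j, γ j *
                (u j ^ (a : ℤ) * ((u j * u j) ^ (-(a : ℤ)) - 1) * (1 - u j * u j)⁻¹)) := by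
            rw [T1, T2, T1split]
        _ = ∑ j, (ϱ⁻¹ * (q - q⁻¹)) *
              ((γ j * u j ^ (-(a : ℤ)) * ((1 - u j ^ 2)⁻¹ - (q - q⁻¹)⁻¹ * ϱ))
              - (γ j * u j ^ (a : ℤ) * ((1 - u j ^ 2)⁻¹ - (q - q⁻¹)⁻¹ * ϱ))
              - (γ j * (u j ^ (a : ℤ) * ((u j * u j) ^ (-(a : ℤ)) - 1) * (1 - u j * u j)⁻¹))) := by
            rw [← Finset.sum_sub_distrib, ← Finset.sum_sub_distrib, ← Finset.mul_sum]
        _ = ∑ j, (u j ^ (a : ℤ) * γ j - u j ^ (-(a : ℤ)) * γ j) := by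
            refine Finset.sum_congr rfl fun j _ => ?_
            have hsq : ((1:F) - u j * u j)⁻¹ = (1 - u j ^ 2)⁻¹ := by rw [sq]
            have hmz : (u j * u j) ^ (-(a : ℤ)) = u j ^ (-(a : ℤ)) * u j ^ (-(a : ℤ)) := mul_zpow _ _ _
            rw [hsq, hmz]
            linear_combination (-(ϱ⁻¹ * (q - q⁻¹)) * γ j * (1 - u j ^ 2)⁻¹ * u j ^ (-(a:ℤ))) * hcan j
              + (γ j * (u j ^ (a:ℤ) - u j ^ (-(a:ℤ)))) * hce
        _ = ω (a : ℤ) - ω (-(a : ℤ)) := by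
            rw [hω (a : ℤ), hω (-(a : ℤ)), ← Finset.sum_sub_distrib]
    rw [E]
    ring
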